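/- Let A : X → Y be bounded linear, G : X → X with contractive residual of constant L < 1, α > 0, y ∈ Y, and let x₁, x₂ be the equilibrium solutions A*(A xᵢ − yᵢ) + α G(xᵢ) = 0 for data y₁, y₂. Then ‖x₁ − x₂‖ ≤ sqrt(1/(2α(1−L))) · ‖y₁ − y₂‖. -/
import Mathlib

open scoped InnerProductSpace

theorem stmt18 {X Y : Type*} [NormedAddCommGroup X] [InnerProductSpace ℝ X]
    [NormedAddCommGroup Y] [InnerProductSpace ℝ Y] [CompleteSpace X] [CompleteSpace Y]
    (A : X →L[ℝ] Y) (G : X → X) (L : ℝ) (hL : L < 1)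
    (hres : ∀ x z : X, ‖(G x - x) - (G z - z)‖ ≤ L * ‖x - z‖)
    (α : ℝ) (hα : 0 < α) (y₁ y₂ : Y) (x₁ x₂ : X)
    (h₁ : (ContinuousLinearMap.adjoint A) (A x₁ - y₁) + α • G x₁ = 0)
    (h₂ : (ContinuousLinearMap.adjoint A) (A x₂ - y₂) + α • G x₂ = 0) :
    ‖x₁ - x₂‖ ≤ Real.sqrt (1 / (2 * α * (1 - L))) * ‖y₁ - y₂‖ := by
  set d := x₁ - x₂ with hd
  set e := y₁ - y₂ with he
  have h0 : (ContinuousLinearMap.adjoint A) (A d - e) + α • (G x₁ - G x₂) = 0 := by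
    have hAd : A d - e = (A x₁ - y₁) - (A x₂ - y₂) := by
      rw [hd, he, map_sub]; abel
    rw [hAd, map_sub, smul_sub]
    have e₁ := eq_neg_of_add_eq_zero_left h₁
    have e₂ := eq_neg_of_add_eq_zero_left h₂
    rw [e₁, e₂]; abel
  -- take inner product with d
  have hip : ⟪A d, A d⟫_ℝ - ⟪e, A d⟫_ℝ + α * ⟪G x₁ - G x₂, d⟫_ℝ = 0 := by
    have := congrArg (fun z => ⟪z, d⟫_ℝ) h0
    simpa [inner_add_left, inner_sub_left, real_inner_smul_left,
      ContinuousLinearMap.adjoint_inner_left] using this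
  -- monotonicity
  have mono : (1 - L) * ‖d‖ ^ 2 ≤ ⟪G x₁ - G x₂, d⟫_ℝ := by
    have h1 : ⟪G x₁ - G x₂, d⟫_ℝ = ⟪d, d⟫_ℝ + ⟪(G x₁ - x₁) - (G x₂ - x₂), d⟫_ℝ := by
      rw [← inner_add_left]; congr 1; rw [hd]; abel
    have h2 : |⟪(G x₁ - x₁) - (G x₂ - x₂), d⟫_ℝ| ≤ (L * ‖d‖) * ‖d‖ := by
      refine le_trans (abs_real_inner_le_norm _ _) ?_
      exact mul_le_mul_of_nonneg_right (by simpa [hd] using hres x₁ x₂) (norm_nonneg d)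
    have h3 := (abs_le.mp h2).1
    have h4 : ⟪d, d⟫_ℝ = ‖d‖ ^ 2 := real_inner_self_eq_norm_sq d
    nlinarith
  have hCS : ⟪e, A d⟫_ℝ ≤ ‖e‖ * ‖A d‖ := real_inner_le_norm e (A d)
  have hAd2 : ⟪A d, A d⟫_ℝ = ‖A d‖ ^ 2 := real_inner_self_eq_norm_sq (A d)
  have hkey : α * (1 - L) * ‖d‖ ^ 2 ≤ ‖e‖ ^ 2 / 2 := by
    nlinarith [sq_nonneg (‖e‖ - ‖A d‖), mul_le_mul_of_nonneg_left mono hα.le]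
  have hc : 0 < 2 * α * (1 - L) := by nlinarith
  have hbound : ‖d‖ ^ 2 ≤ 1 / (2 * α * (1 - L)) * ‖e‖ ^ 2 := by
    rw [div_mul_eq_mul_div, one_mul, le_div_iff₀ hc]; nlinarith
  calc ‖d‖ = Real.sqrt (‖d‖ ^ 2) := (Real.sqrt_sq (norm_nonneg d)).symm
    _ ≤ Real.sqrt (1 / (2 * α * (1 - L)) * ‖e‖ ^ 2) := Real.sqrt_le_sqrt hbound
    _ = Real.sqrt (1 / (2 * α * (1 - L))) * ‖e‖ := by
        rw [Real.sqrt_mul (by positivity), Real.sqrt_sq (norm_nonneg e)]
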